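/- Let S = ⊕_{n∈ℤ} Sₙ be a ℤ-graded commutative ring and V• = (V^m)_{m∈ℕ} a decreasing sequence of graded ideals of S (so V^{m+1}ₙ ⊆ V^mₙ for all m, n). Suppose S is V•-adic, i.e. for every n the natural map Sₙ → lim_m Sₙ/V^mₙ is bijective. Then every finitely generated graded S-module M that is projective over S is V•-adic, i.e. for every n the natural map Mₙ → lim_m Mₙ/(Mₙ ∩ V^m M) is bijective. -/

import Mathlib

/-- Let `S = ⨁ₙ Sₙ` be a ℤ-graded commutative ring and
`V• = (V^m)_{m∈ℕ}` a decreasing sequence of graded (i.e. homogeneous) ideals of `S`.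
Suppose `S` is `V•`-adic, i.e. for every `n` the natural map
`Sₙ → lim_m Sₙ/V^mₙ` is bijective — elementwise: its kernel `⋂ₘ (Sₙ ∩ V^m)` is zero
(injectivity) and every compatible sequence `(xₘ)` with `xₘ ∈ Sₙ` and
`x_{m+1} - xₘ ∈ V^m` is realized by some `a ∈ Sₙ` with `a - xₘ ∈ V^m` for all `m`
(surjectivity).  Then every finitely generated graded `S`-module `M` that is
projective over `S` is `V•`-adic: for every `n` the natural map
`Mₙ → lim_m Mₙ/(Mₙ ∩ V^m M)` is bijective, where `V^m M = V^m • M`. -/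
theorem finiteProjectiveGradedModule_isAdic
    {A : Type*} [CommRing A] (𝒜 : ℤ → AddSubgroup A) [GradedRing 𝒜]
    (V : ℕ → Ideal A)
    (hdecreasing : ∀ m : ℕ, V (m + 1) ≤ V m)
    (hhomogeneous : ∀ m : ℕ, (V m).IsHomogeneous 𝒜)
    -- `S` is `V•`-adic:
    (hSinj : ∀ (n : ℤ), ∀ a ∈ 𝒜 n, (∀ m : ℕ, a ∈ V m) → a = 0)
    (hSsurj : ∀ (n : ℤ) (x : ℕ → A), (∀ m, x m ∈ 𝒜 n) →
      (∀ m, x (m + 1) - x m ∈ V m) → ∃ a ∈ 𝒜 n, ∀ m, a - x m ∈ V m)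
    -- `M` is a finite projective graded `S`-module:
    {M : Type*} [AddCommGroup M] [Module A M]
    (ℳ : ℤ → AddSubgroup M)
    (hinternal : DirectSum.IsInternal ℳ)
    (hgradedSMul : ∀ (i j : ℤ), ∀ a ∈ 𝒜 i, ∀ x ∈ ℳ j, a • x ∈ ℳ (i + j))
    [Module.Finite A M] [Module.Projective A M] :
    (∀ (n : ℤ), ∀ x ∈ ℳ n, (∀ m : ℕ, x ∈ (V m) • (⊤ : Submodule A M)) → x = 0) ∧
    (∀ (n : ℤ) (x : ℕ → M), (∀ m, x m ∈ ℳ n) →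
      (∀ m, x (m + 1) - x m ∈ (V m) • (⊤ : Submodule A M)) →
      ∃ y ∈ ℳ n, ∀ m, y - x m ∈ (V m) • (⊤ : Submodule A M)) := by
  classical
  letI : DirectSum.Decomposition ℳ := hinternal.chooseDecomposition
  -- Key lemma: graded component of `c • y` for homogeneous `y`.
  have key : ∀ (c : A) (dd nn : ℤ) (y : M), y ∈ ℳ dd →
      (DirectSum.decompose ℳ (c • y) nn : M) = (DirectSum.decompose 𝒜 c (nn - dd) : A) • y := by
    intro c dd nn y hy
    conv_lhs => rw [← DirectSum.sum_support_decompose 𝒜 c, Finset.sum_smul]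
    have : ∀ i : ℤ, (DirectSum.decompose ℳ ((DirectSum.decompose 𝒜 c i : A) • y) nn : M)
        = if i = nn - dd then (DirectSum.decompose 𝒜 c i : A) • y else 0 := by
      intro i
      have hm : (DirectSum.decompose 𝒜 c i : A) • y ∈ ℳ (i + dd) :=
        hgradedSMul i dd _ (DirectSum.decompose 𝒜 c i).2 y hy
      by_cases h : i = nn - dd
      · subst h
        rw [if_pos rfl]
        exact DirectSum.decompose_of_mem_same ℳ (by rwa [sub_add_cancel] at hm)
      · rw [if_neg h]
        exact DirectSum.decompose_of_mem_ne ℳ hm (by omega)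
    rw [DirectSum.decompose_sum, DFinsupp.finset_sum_apply, AddSubmonoidClass.coe_finset_sum]
    simp_rw [this]
    rw [Finset.sum_ite_eq' _ (nn - dd)]
    by_cases h : nn - dd ∈ (DirectSum.decompose 𝒜 c).support
    · rw [if_pos h]
    · rw [if_neg h, DFinsupp.notMem_support_iff.mp h]
      simp
  -- homogeneous finite generating family
  obtain ⟨k, g, hg⟩ := Module.Finite.exists_fin (R := A) (M := M)
  let ι : Type _ := (j : Fin k) × ((DirectSum.decompose ℳ (g j)).support : Finset ℤ)
  let e : ι → M := fun p => (DirectSum.decompose ℳ (g p.1) p.2 : M)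
  let d : ι → ℤ := fun p => (p.2 : ℤ)
  have he : ∀ p : ι, e p ∈ ℳ (d p) := fun p => (DirectSum.decompose ℳ (g p.1) p.2).2
  have hspan : Submodule.span A (Set.range e) = ⊤ := by
    rw [eq_top_iff, ← hg, Submodule.span_le]
    rintro _ ⟨j, rfl⟩
    rw [← DirectSum.sum_support_decompose ℳ (g j)]
    exact Submodule.sum_mem _ fun i hi => Submodule.subset_span ⟨⟨j, ⟨i, hi⟩⟩, rfl⟩
  -- the surjection π and its section s
  let π : (ι → A) →ₗ[A] M := Fintype.linearCombination A e
  have hπ : Function.Surjective π := by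
    intro x
    have : x ∈ Submodule.span A (Set.range e) := hspan ▸ Submodule.mem_top
    obtain ⟨c, hc⟩ := (Submodule.mem_span_range_iff_exists_fun A).mp this
    exact ⟨c, by simpa [π, Fintype.linearCombination_apply] using hc⟩
  obtain ⟨s, hs⟩ := Module.projective_lifting_property π LinearMap.id hπ
  have hsx : ∀ x : M, π (s x) = x := fun x => congrArg (· x) (congrArg DFunLike.coe hs)
  -- π applied to a function and its graded component
  have hπapp : ∀ c : ι → A, π c = ∑ p : ι, c p • e p := fun c => rfl
  have hπdec : ∀ (c : ι → A) (nn : ℤ),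
      (DirectSum.decompose ℳ (π c) nn : M)
        = ∑ p : ι, (DirectSum.decompose 𝒜 (c p) (nn - d p) : A) • e p := by
    intro c nn
    rw [hπapp, DirectSum.decompose_sum, DFinsupp.finset_sum_apply,
      AddSubmonoidClass.coe_finset_sum]
    exact Finset.sum_congr rfl fun p _ => key (c p) (d p) nn (e p) (he p)
  -- the graded section t
  let t : ℤ → M → ι → A := fun n x p => (DirectSum.decompose 𝒜 (s x p) (n - d p) : A)
  have ht𝒜 : ∀ n x p, t n x p ∈ 𝒜 (n - d p) := fun n x p => (DirectSum.decompose 𝒜 (s x p) (n - d p)).2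
  have hts : ∀ (n : ℤ), ∀ x ∈ ℳ n, π (t n x) = x := by
    intro n x hx
    have : π (t n x) = (DirectSum.decompose ℳ (π (s x)) n : M) := by
      rw [hπdec (s x) n, hπapp]
    rw [this, hsx, DirectSum.decompose_of_mem_same ℳ hx]
  -- components of s x lie in V m when x ∈ V m • ⊤
  have hVs : ∀ (m : ℕ), ∀ x ∈ V m • (⊤ : Submodule A M), ∀ p, s x p ∈ V m := by
    intro m x hx p
    have h1 : s x ∈ (V m • (⊤ : Submodule A M)).map s := ⟨x, hx, rfl⟩
    rw [Submodule.map_smul''] at h1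
    have h2 : s x ∈ V m • (⊤ : Submodule A (ι → A)) :=
      SetLike.le_def.mp (smul_mono_right _ le_top) h1
    have h3 : s x p ∈ (V m • (⊤ : Submodule A (ι → A))).map (LinearMap.proj p) := ⟨_, h2, rfl⟩
    rw [Submodule.map_smul''] at h3
    have h4 : s x p ∈ V m • (⊤ : Submodule A A) := SetLike.le_def.mp (smul_mono_right _ le_top) h3
    simpa [Ideal.smul_eq_mul, Ideal.mul_top] using h4
  have htV : ∀ (n : ℤ) (m : ℕ), ∀ x ∈ V m • (⊤ : Submodule A M), ∀ p, t n x p ∈ V m :=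
    fun n m x hx p => hhomogeneous m (n - d p) (hVs m x hx p)
  constructor
  · -- injectivity
    intro n x hx hVx
    have hzero : ∀ p, t n x p = 0 := fun p =>
      hSinj (n - d p) _ (ht𝒜 n x p) (fun m => htV n m x (hVx m) p)
    have : π (t n x) = 0 := by
      rw [hπapp]
      refine Finset.sum_eq_zero fun p _ => ?_
      rw [hzero p, zero_smul]
    rw [← hts n x hx, this]
  · -- surjectivity
    intro n x hxmem hxdiff
    have hdiff : ∀ (m : ℕ) (p : ι), t n (x (m+1)) p - t n (x m) p ∈ V m := by
      intro m p
      have : t n (x (m+1)) p - t n (x m) p = t n (x (m+1) - x m) p := by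
        simp only [t, map_sub, Pi.sub_apply]
        rw [DirectSum.decompose_sub, DFinsupp.sub_apply, AddSubgroupClass.coe_sub]
      rw [this]
      exact htV n m _ (hxdiff m) p
    choose a ha𝒜 haV using fun p : ι =>
      hSsurj (n - d p) (fun m => t n (x m) p) (fun m => ht𝒜 n (x m) p) (fun m => hdiff m p)
    refine ⟨π a, ?_, ?_⟩
    · rw [hπapp]
      refine AddSubgroup.sum_mem _ fun p _ => ?_
      have := hgradedSMul (n - d p) (d p) (a p) (ha𝒜 p) (e p) (he p)
      rwa [sub_add_cancel] at this
    · intro m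
      have : π a - x m = π (a - t n (x m)) := by
        rw [map_sub, hts n (x m) (hxmem m)]
      rw [this, hπapp]
      refine Submodule.sum_mem _ fun p _ => ?_
      exact Submodule.smul_mem_smul (by simpa using haV p m) Submodule.mem_top
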